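/- Let F : ℝ⁴ → ℝ³ be a linear map whose kernel is spanned by a vector U with η(U,U) = −1 and whose rank is 3. Set 𝔠 = Fᵗ ∘ F, χ₁ = (tr 𝔠)·id − 𝔠, σ₂ = ½((tr 𝔠)² − tr(𝔠²)), χ₂ = σ₂·id − 𝔠 ∘ χ₁, σ₃ = (1/3)·tr(𝔠 ∘ χ₂), and ω(X) = η(U,X). Then σ₃ > 0, and for every real number k and all X, Y ∈ ℝ⁴: (1/2)σ₃ᵏ·η(X,Y) − k·σ₃^{k−1}·⟨F(χ₂ X), F Y⟩ = −((2k−1)/2)·σ₃ᵏ·( η(X,Y) + ω(X)·ω(Y) ) − (1/2)·σ₃ᵏ·ω(X)·ω(Y). (This is the pointwise statement that the σ₃ᵏ-stress-energy tensor has the perfect fluid form with equation of state p = (2k−1)ρ, ρ = σ₃ᵏ.) -/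

import Mathlib

open scoped BigOperators

noncomputable section

def eta (v w : Fin 4 → ℝ) : ℝ := v 0 * w 0 + v 1 * w 1 + v 2 * w 2 - v 3 * w 3

def euclid (v w : Fin 3 → ℝ) : ℝ := ∑ i, v i * w i

def CG (F : (Fin 4 → ℝ) →ₗ[ℝ] (Fin 3 → ℝ)) (Ft : (Fin 3 → ℝ) →ₗ[ℝ] (Fin 4 → ℝ)) :
    (Fin 4 → ℝ) →ₗ[ℝ] (Fin 4 → ℝ) := Ft ∘ₗ F

def trE (c : (Fin 4 → ℝ) →ₗ[ℝ] (Fin 4 → ℝ)) : ℝ := LinearMap.trace ℝ (Fin 4 → ℝ) c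

def chi1 (F : (Fin 4 → ℝ) →ₗ[ℝ] (Fin 3 → ℝ)) (Ft : (Fin 3 → ℝ) →ₗ[ℝ] (Fin 4 → ℝ)) :
    (Fin 4 → ℝ) →ₗ[ℝ] (Fin 4 → ℝ) :=
  trE (CG F Ft) • LinearMap.id - CG F Ft

def sigma2 (F : (Fin 4 → ℝ) →ₗ[ℝ] (Fin 3 → ℝ)) (Ft : (Fin 3 → ℝ) →ₗ[ℝ] (Fin 4 → ℝ)) : ℝ :=
  ((trE (CG F Ft)) ^ 2 - trE (CG F Ft ∘ₗ CG F Ft)) / 2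

def chi2 (F : (Fin 4 → ℝ) →ₗ[ℝ] (Fin 3 → ℝ)) (Ft : (Fin 3 → ℝ) →ₗ[ℝ] (Fin 4 → ℝ)) :
    (Fin 4 → ℝ) →ₗ[ℝ] (Fin 4 → ℝ) :=
  sigma2 F Ft • LinearMap.id - CG F Ft ∘ₗ chi1 F Ft

def sigma3 (F : (Fin 4 → ℝ) →ₗ[ℝ] (Fin 3 → ℝ)) (Ft : (Fin 3 → ℝ) →ₗ[ℝ] (Fin 4 → ℝ)) : ℝ :=
  trE (CG F Ft ∘ₗ chi2 F Ft) / 3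

/-! ### Auxiliary lemmas -/

lemma tr4 (C : Matrix (Fin 4) (Fin 4) ℝ) :
    C.trace = C 0 0 + C 1 1 + C 2 2 + C 3 3 := by
  simp [Matrix.trace, Fin.sum_univ_four]

lemma det4 (C : Matrix (Fin 4) (Fin 4) ℝ) : C.det =
    C 0 0*(C 1 1*C 2 2*C 3 3 - C 1 1*C 2 3*C 3 2 - C 1 2*C 2 1*C 3 3 + C 1 2*C 2 3*C 3 1 + C 1 3*C 2 1*C 3 2 - C 1 3*C 2 2*C 3 1)
  - C 0 1*(C 1 0*C 2 2*C 3 3 - C 1 0*C 2 3*C 3 2 - C 1 2*C 2 0*C 3 3 + C 1 2*C 2 3*C 3 0 + C 1 3*C 2 0*C 3 2 - C 1 3*C 2 2*C 3 0)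
  + C 0 2*(C 1 0*C 2 1*C 3 3 - C 1 0*C 2 3*C 3 1 - C 1 1*C 2 0*C 3 3 + C 1 1*C 2 3*C 3 0 + C 1 3*C 2 0*C 3 1 - C 1 3*C 2 1*C 3 0)
  - C 0 3*(C 1 0*C 2 1*C 3 2 - C 1 0*C 2 2*C 3 1 - C 1 1*C 2 0*C 3 2 + C 1 1*C 2 2*C 3 0 + C 1 2*C 2 0*C 3 1 - C 1 2*C 2 1*C 3 0) := by
  rw [Matrix.det_succ_row_zero]
  simp (config := { decide := true }) [Fin.sum_univ_succ, Matrix.det_fin_three,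
    Matrix.submatrix, Fin.succAbove,
    show (Fin.succ 2 : Fin 4) = 3 from rfl, show (Fin.castSucc 2 : Fin 4) = 2 from rfl]
  ring

lemma det3 (B : Matrix (Fin 3) (Fin 3) ℝ) :
    B.det = ((B.trace)^3 - 3*B.trace*(B*B).trace + 2*(B*B*B).trace)/6 := by
  simp [Matrix.det_fin_three, Matrix.trace_fin_three, Matrix.mul_apply, Fin.sum_univ_succ]
  ring

set_option maxHeartbeats 2000000 in
lemma ch4 (C : Matrix (Fin 4) (Fin 4) ℝ) :
    C*C*C*C - C.trace • (C*C*C) + (((C.trace)^2 - (C*C).trace)/2) • (C*C)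
      - (((C.trace)^3 - 3*C.trace*(C*C).trace + 2*(C*C*C).trace)/6) • C
      = - C.det • (1 : Matrix (Fin 4) (Fin 4) ℝ) := by
  rw [det4, tr4, tr4, tr4]
  ext i j
  fin_cases i <;> fin_cases j <;>
    simp [Matrix.mul_apply, Fin.sum_univ_four, Matrix.one_apply] <;> ring

lemma eta_comm (v w : Fin 4 → ℝ) : eta v w = eta w v := by unfold eta; ring

lemma euclid_comm (v w : Fin 3 → ℝ) : euclid v w = euclid w v := by
  unfold euclid; simp [mul_comm]

lemma mink (U x : Fin 4 → ℝ) (hU : eta U U = -1) (hx : eta U x = 0) (hx0 : x ≠ 0) :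
    0 < eta x x := by
  unfold eta at *
  have hw : U 0 * x 0 + U 1 * x 1 + U 2 * x 2 = U 3 * x 3 := by linarith
  have h2 : (U 0 * x 0 + U 1 * x 1 + U 2 * x 2)^2 = (U 3 * x 3)^2 := by rw [hw]
  have h3 : 0 < x 0 ^ 2 + x 1 ^ 2 + x 2 ^ 2 := by
    rcases eq_or_ne (x 0) 0 with h0 | h0
    · rcases eq_or_ne (x 1) 0 with h1 | h1
      · rcases eq_or_ne (x 2) 0 with hh2 | hh2
        · exfalso
          have hU3 : U 3 ≠ 0 := by
            intro h; rw [h] at hU; nlinarith [sq_nonneg (U 0), sq_nonneg (U 1), sq_nonneg (U 2)]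
          have hx3 : x 3 = 0 := by
            have : U 3 * x 3 = 0 := by rw [← hw, h0, h1, hh2]; ring
            exact (mul_eq_zero.mp this).resolve_left hU3
          apply hx0
          funext i
          fin_cases i <;> simpa
        · positivity
      · positivity
    · positivity
  nlinarith [sq_nonneg (x 0*U 1 - x 1*U 0), sq_nonneg (x 0*U 2 - x 2*U 0),
    sq_nonneg (x 1*U 2 - x 2*U 1), sq_nonneg (U 3), h2, h3]

lemma euclid_single (w : Fin 3 → ℝ) (i : Fin 3) :
    euclid w (fun k => if k = i then 1 else 0) = w i := by
  simp [euclid]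

set_option maxHeartbeats 1600000 in
theorem statement4
    (F : (Fin 4 → ℝ) →ₗ[ℝ] (Fin 3 → ℝ)) (Ft : (Fin 3 → ℝ) →ₗ[ℝ] (Fin 4 → ℝ))
    (hadj : ∀ (v : Fin 4 → ℝ) (w : Fin 3 → ℝ), euclid (F v) w = eta v (Ft w))
    (U : Fin 4 → ℝ)
    (hker : LinearMap.ker F = Submodule.span ℝ {U})
    (hU : eta U U = -1)
    (hrank : Module.finrank ℝ (LinearMap.range F) = 3) :
    0 < sigma3 F Ft ∧
    ∀ (k : ℝ) (X Y : Fin 4 → ℝ),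
      (1 / 2) * sigma3 F Ft ^ k * eta X Y
          - k * sigma3 F Ft ^ (k - 1) * euclid (F (chi2 F Ft X)) (F Y)
        = -((2 * k - 1) / 2) * sigma3 F Ft ^ k * (eta X Y + eta U X * eta U Y)
          - (1 / 2) * sigma3 F Ft ^ k * (eta U X * eta U Y) := by
  classical
  -- basic facts
  have hFU : F U = 0 := by
    have : U ∈ LinearMap.ker F := by rw [hker]; exact Submodule.mem_span_singleton_self U
    simpa using this
  have hU0 : U ≠ 0 := by
    intro h; rw [h] at hU; unfold eta at hU; norm_num at hU
  have euclid_pos : ∀ w : Fin 3 → ℝ, w ≠ 0 → 0 < euclid w w := by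
    intro w hw
    have hsum : euclid w w = w 0^2 + w 1^2 + w 2^2 := by
      simp [euclid, Fin.sum_univ_three]; ring
    rw [hsum]
    rcases eq_or_ne (w 0) 0 with h0 | h0
    · rcases eq_or_ne (w 1) 0 with h1 | h1
      · rcases eq_or_ne (w 2) 0 with h2 | h2
        · exact absurd (funext fun i => by fin_cases i <;> simpa) hw
        · positivity
      · positivity
    · positivity
  have hrange : LinearMap.range F = ⊤ := by
    have h3 : Module.finrank ℝ (Fin 3 → ℝ) = 3 := (Module.finrank_fin_fun ℝ)
    exact Submodule.eq_top_of_finrank_eq (hrank.trans h3.symm)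
  have hsurj : Function.Surjective F := LinearMap.range_eq_top.mp hrange
  have hFt_inj : ∀ w, Ft w = 0 → w = 0 := by
    intro w hw
    by_contra hw0
    obtain ⟨v, hv⟩ := hsurj w
    have h1 := hadj v w
    rw [hv, hw] at h1
    simp only [eta, Pi.zero_apply, mul_zero, add_zero, sub_zero, zero_add] at h1
    have := euclid_pos w hw0
    rw [h1] at this
    norm_num at this
  have hkerc : ∀ v, CG F Ft v = 0 → F v = 0 := by
    intro v hv
    by_contra hFv
    have h1 : euclid (F v) (F v) = eta v (Ft (F v)) := hadj v (F v)
    have h2 : Ft (F v) = CG F Ft v := rfl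
    rw [h2, hv] at h1
    simp only [eta, Pi.zero_apply, mul_zero, add_zero, sub_zero, zero_add] at h1
    have := euclid_pos (F v) hFv
    rw [h1] at this
    norm_num at this
  have hUorth : ∀ w, eta U (Ft w) = 0 := by
    intro w
    have h := hadj U w
    rw [hFU] at h
    simp only [euclid, Pi.zero_apply, zero_mul, Finset.sum_const_zero] at h
    exact h.symm
  -- matrices
  set Pm := LinearMap.toMatrix' (F : (Fin 4 → ℝ) →ₗ[ℝ] (Fin 3 → ℝ)) with hPm
  set Qm := LinearMap.toMatrix' (Ft : (Fin 3 → ℝ) →ₗ[ℝ] (Fin 4 → ℝ)) with hQm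
  have hCm : LinearMap.toMatrix' (CG F Ft) = Qm * Pm := LinearMap.toMatrix'_comp Ft F
  have trE_eq : ∀ f : (Fin 4 → ℝ) →ₗ[ℝ] (Fin 4 → ℝ), trE f = (LinearMap.toMatrix' f).trace := by
    intro f
    rw [trE, LinearMap.trace_eq_matrix_trace ℝ (Pi.basisFun ℝ (Fin 4)) f,
      LinearMap.toMatrix_eq_toMatrix']
  have hp1 : trE (CG F Ft) = (Qm * Pm).trace := by rw [trE_eq, hCm]
  have hp2 : trE (CG F Ft ∘ₗ CG F Ft) = (Qm * Pm * (Qm * Pm)).trace := by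
    rw [trE_eq, LinearMap.toMatrix'_comp, hCm]
  have hs2 : sigma2 F Ft = (((Qm*Pm).trace)^2 - (Qm*Pm*(Qm*Pm)).trace)/2 := by
    rw [sigma2, hp1, hp2]
  have hchi2m : LinearMap.toMatrix' (chi2 F Ft)
      = sigma2 F Ft • 1 - Qm * Pm * (trE (CG F Ft) • 1 - Qm * Pm) := by
    rw [chi2, chi1]
    simp only [map_sub, map_smul, LinearMap.toMatrix'_comp, LinearMap.toMatrix'_id, hCm]
  have hs3 : sigma3 F Ft
      = (((Qm*Pm).trace)^3 - 3*(Qm*Pm).trace*(Qm*Pm*(Qm*Pm)).trace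
          + 2*(Qm*Pm*(Qm*Pm)*(Qm*Pm)).trace)/6 := by
    rw [sigma3, trE_eq, LinearMap.toMatrix'_comp, hCm, hchi2m, hs2, hp1]
    simp only [Matrix.mul_sub, Matrix.mul_smul, Matrix.mul_one, Matrix.trace_sub,
      Matrix.trace_smul, smul_eq_mul, Matrix.mul_assoc]
    ring
  -- trace transfer to the 3×3 side
  have t1 : (Qm*Pm).trace = (Pm*Qm).trace := Matrix.trace_mul_comm Qm Pm
  have t2 : (Qm*Pm*(Qm*Pm)).trace = (Pm*Qm*(Pm*Qm)).trace := by
    have h := Matrix.trace_mul_comm Qm (Pm * (Qm * Pm))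
    simpa [Matrix.mul_assoc] using h
  have t3 : (Qm*Pm*(Qm*Pm)*(Qm*Pm)).trace = (Pm*Qm*(Pm*Qm)*(Pm*Qm)).trace := by
    have h := Matrix.trace_mul_comm Qm (Pm * (Qm * Pm) * (Qm * Pm))
    simpa [Matrix.mul_assoc] using h
  have hs3B : sigma3 F Ft = (Pm*Qm).det := by
    rw [hs3, t1, t2, t3, det3 (Pm*Qm)]
  -- positive definiteness of Pm*Qm
  have hBlin : ∀ x : Fin 3 → ℝ, Matrix.mulVec (Pm*Qm) x = F (Ft x) := by
    intro x
    rw [← Matrix.toLin'_apply, ← LinearMap.toMatrix'_comp, Matrix.toLin'_toMatrix']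
    rfl
  have hentry : ∀ i j, (Pm*Qm) i j
      = eta (Ft (fun k => if k = j then 1 else 0)) (Ft (fun k => if k = i then 1 else 0)) := by
    intro i j
    rw [← LinearMap.toMatrix'_comp, LinearMap.toMatrix'_apply]
    rw [show (Pi.single j 1 : Fin 3 → ℝ) = fun j' => if j' = j then 1 else 0 from
      funext fun k => by simp [Pi.single_apply]]
    have h1 : ((F ∘ₗ Ft) fun j' => if j' = j then 1 else 0) i
        = euclid (F (Ft (fun j' => if j' = j then 1 else 0))) (fun k => if k = i then 1 else 0) := by
      rw [euclid_single]
      rfl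
    rw [h1, hadj]
  have hposdef : (Pm*Qm).PosDef := by
    refine Matrix.PosDef.of_dotProduct_mulVec_pos ?_ ?_
    · show Matrix.conjTranspose (Pm*Qm) = Pm*Qm
      ext i j
      rw [Matrix.conjTranspose_apply, star_trivial, hentry i j, hentry j i, eta_comm]
    · intro x hx
      have hsx : star x = x := funext fun i => star_trivial _
      rw [hsx, hBlin]
      have hdot : dotProduct x (F (Ft x)) = euclid (F (Ft x)) x := by
        simp [euclid, dotProduct, mul_comm]
      rw [hdot, hadj]
      exact mink U (Ft x) hU (hUorth x) (fun h => hx (hFt_inj x h))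
  have hσpos : 0 < sigma3 F Ft := by rw [hs3B]; exact hposdef.det_pos
  -- determinant of Qm*Pm vanishes
  have hClin : ∀ x : Fin 4 → ℝ, Matrix.mulVec (Qm*Pm) x = CG F Ft x := by
    intro x
    rw [← hCm, ← Matrix.toLin'_apply, Matrix.toLin'_toMatrix']
  have hCU : Matrix.mulVec (Qm*Pm) U = 0 := by
    rw [hClin]
    show Ft (F U) = 0
    rw [hFU, map_zero]
  have hdetC : (Qm*Pm).det = 0 := Matrix.exists_mulVec_eq_zero_iff.mp ⟨U, hU0, hCU⟩
  -- Cayley–Hamilton consequence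
  have hch := ch4 (Qm*Pm)
  rw [hdetC, ← hs2, ← hs3, ← hp1] at hch
  simp only [neg_zero, zero_smul] at hch
  simp only [Matrix.mul_assoc] at hch
  have hch' : CG F Ft ∘ₗ (CG F Ft ∘ₗ chi2 F Ft - sigma3 F Ft • LinearMap.id) = 0 := by
    apply LinearMap.toMatrix'.injective
    simp only [map_sub, map_smul, LinearMap.toMatrix'_comp, LinearMap.toMatrix'_id, hCm,
      hchi2m, map_zero]
    rw [← hch]
    simp only [Matrix.mul_sub, Matrix.sub_mul, Matrix.mul_smul, Matrix.smul_mul,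
      Matrix.mul_one, Matrix.one_mul, Matrix.mul_assoc]
    abel
  have key : ∀ X, CG F Ft (CG F Ft (chi2 F Ft X) - sigma3 F Ft • X) = 0 := by
    intro X
    have h := LinearMap.ext_iff.mp hch' X
    simpa using h
  -- structure of 𝔠 ∘ χ₂
  have hkey2 : ∀ X, CG F Ft (chi2 F Ft X)
      = sigma3 F Ft • X + (sigma3 F Ft * eta U X) • U := by
    intro X
    set Z := CG F Ft (chi2 F Ft X) - sigma3 F Ft • X with hZ
    have hFZ : F Z = 0 := hkerc Z (key X)
    have hZmem : Z ∈ Submodule.span ℝ {U} := by rw [← hker]; exact LinearMap.mem_ker.mpr hFZ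
    obtain ⟨r, hr⟩ := Submodule.mem_span_singleton.mp hZmem
    have h2 : eta U (CG F Ft (chi2 F Ft X)) = 0 := hUorth (F (chi2 F Ft X))
    have h1 : eta U Z = - (sigma3 F Ft * eta U X) := by
      rw [hZ]
      unfold eta at h2 ⊢
      simp only [Pi.sub_apply, Pi.smul_apply, smul_eq_mul]
      linear_combination h2
    have h3 : eta U Z = -r := by
      rw [← hr]
      have : eta U (r • U) = r * eta U U := by
        unfold eta; simp only [Pi.smul_apply, smul_eq_mul]; ring
      rw [this, hU]; ring
    have hr' : r = sigma3 F Ft * eta U X := by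
      have := h1.symm.trans h3
      linarith
    have hZval : Z = (sigma3 F Ft * eta U X) • U := by rw [← hr, hr']
    have := hZ.symm.trans hZval
    have hfin : CG F Ft (chi2 F Ft X) = (sigma3 F Ft * eta U X) • U + sigma3 F Ft • X :=
      sub_eq_iff_eq_add.mp this
    rw [hfin]; abel
  -- the main bilinear identity
  have hFF : ∀ X Y, euclid (F (chi2 F Ft X)) (F Y)
      = sigma3 F Ft * (eta X Y + eta U X * eta U Y) := by
    intro X Y
    rw [euclid_comm, hadj Y (F (chi2 F Ft X))]
    have hrfl : Ft (F (chi2 F Ft X)) = CG F Ft (chi2 F Ft X) := rfl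
    rw [hrfl, hkey2 X]
    unfold eta
    simp only [Pi.add_apply, Pi.smul_apply, smul_eq_mul]
    ring
  refine ⟨hσpos, ?_⟩
  intro k X Y
  have hpow : sigma3 F Ft ^ (k-1) * sigma3 F Ft = sigma3 F Ft ^ k := by
    have h := Real.rpow_add hσpos (k-1) 1
    rw [Real.rpow_one] at h
    rw [← h]
    congr 1
    ring
  rw [hFF X Y]
  linear_combination ((-k) * (eta X Y + eta U X * eta U Y)) * hpow
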